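/- Let X be a non-deterministic infinite exchangeable sequence of {0,1}-valued random variables whose de Finetti measure γ is not a Dirac mass (i.e., X is not i.i.d.). Suppose there exist real sequences (a_n)_{n≥1} and (b_n)_{n≥1} such that for every n ≥ 1 and every p = 0,…,n, the predictive probability P^n_{n+1}(0^(p) | 0^(p)) equals a_n·p + b_n. Then γ is a Beta(α,β) distribution for some α, β > 0. -/

import Mathlib

open MeasureTheory

namespace HoeffdingUrn

variable {Ω : Type} [MeasurableSpace Ω]

/-- `X` is an exchangeable sequence under `μ`: each `X i` is measurable and, for every `n`
and every permutation `π` of `{0,…,n-1}`, the law of `(X_{π 0},…,X_{π (n-1)})` coincides with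
the law of `(X_0,…,X_{n-1})`. -/
def Exchangeable {D : Type} [MeasurableSpace D] (X : ℕ → Ω → D) (μ : Measure Ω) : Prop :=
  (∀ i, Measurable (X i)) ∧
  ∀ (n : ℕ) (π : Equiv.Perm (Fin n)),
    Measure.map (fun ω (i : Fin n) => X ((π i : Fin n) : ℕ) ω) μ =
      Measure.map (fun ω (i : Fin n) => X (i : ℕ) ω) μ

/-- probability that the first `n` variables equal the vector `x`. -/
noncomputable def cylProb {D : Type} (X : ℕ → Ω → D) (μ : Measure Ω) {n : ℕ}
    (x : Fin n → D) : ℝ :=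
  (μ {ω | ∀ i : Fin n, X (i : ℕ) ω = x i}).toReal

/-- `X` is non-deterministic: every finite configuration has positive probability. -/
def NonDeterministic {D : Type} (X : ℕ → Ω → D) (μ : Measure Ω) : Prop :=
  ∀ n : ℕ, 1 ≤ n → ∀ x : Fin n → D, 0 < cylProb X μ x

/-- the canonical vector of `{0,1}ⁿ` (with `false` = 0) containing exactly `j` zeros. -/
def zeroVec (n j : ℕ) : Fin n → Bool := fun i => decide (j ≤ (i : ℕ))

/-- number of zeros (`false` entries) in a Boolean vector. -/
def zeroCountVec {n : ℕ} (x : Fin n → Bool) : ℕ :=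
  (Finset.univ.filter fun i => x i = false).card

/-- `P_n(0^{(j)})`: the common probability of any configuration of `(X_1,…,X_n)` with
exactly `j` zeros. -/
noncomputable def Pz (X : ℕ → Ω → Bool) (μ : Measure Ω) (n j : ℕ) : ℝ :=
  cylProb X μ (zeroVec n j)

/-- number of zeros among the first `n` variables. -/
def zeroCount (X : ℕ → Ω → Bool) (n : ℕ) (ω : Ω) : ℕ :=
  zeroCountVec (fun i : Fin n => X (i : ℕ) ω)

/-- `P^n_{n+v}(0^{(b)} ∣ 0^{(a)})`: conditional probability that `(X_1,…,X_{n+v})`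
contains exactly `b` zeros given that `(X_1,…,X_n)` contains exactly `a` zeros. -/
noncomputable def condP (X : ℕ → Ω → Bool) (μ : Measure Ω) (n v b a : ℕ) : ℝ :=
  (μ {ω | zeroCount X (n + v) ω = b ∧ zeroCount X n ω = a}).toReal /
    (μ {ω | zeroCount X n ω = a}).toReal

/-- a symmetric function of `k` variables. -/
def SymmFun {D : Type} {k : ℕ} (φ : (Fin k → D) → ℝ) : Prop :=
  ∀ (π : Equiv.Perm (Fin k)) (x : Fin k → D), φ (x ∘ π) = φ x

open Classical in
/-- the symmetric `U`-statistic with kernel `φ` of order `k`, based on `(X_1,…,X_n)`: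
`F = ∑_{1 ≤ j₁ < … < j_k ≤ n} φ(X_{j₁},…,X_{j_k})`. -/
noncomputable def Ustat {D : Type} (X : ℕ → Ω → D) (n : ℕ) {k : ℕ}
    (φ : (Fin k → D) → ℝ) : Ω → ℝ :=
  fun ω => ∑ j : Fin k → Fin n, if StrictMono j then φ (fun i => X ((j i : Fin n) : ℕ) ω) else 0

/-- complete degeneracy of the kernel `φ` of order `k`:
`E[φ(X_1,…,X_k) ∣ X_2,…,X_k] = 0` a.s. -/
def Degenerate {D : Type} [MeasurableSpace D] (X : ℕ → Ω → D) (μ : Measure Ω) {k : ℕ}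
    (φ : (Fin k → D) → ℝ) : Prop :=
  μ[(fun ω => φ (fun i => X (i : ℕ) ω)) |
      MeasurableSpace.comap (fun ω (i : Fin (k - 1)) => X ((i : ℕ) + 1) ω) inferInstance]
    =ᵐ[μ] 0

/-- `X` is Hoeffding decomposable: for every `n ≥ 2` and `1 ≤ k ≤ n`, a symmetric
`U`-statistic of order `k` based on `(X_1,…,X_n)` is orthogonal to `SU_{k-1}(X_{[n]})`
(equivalently, lies in `SH_k(X_{[n]})`) if and only if its kernel is completely degenerate. -/
def HoeffdingDecomposable {D : Type} [MeasurableSpace D] (X : ℕ → Ω → D) (μ : Measure Ω) :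
    Prop :=
  ∀ n : ℕ, 2 ≤ n → ∀ k : ℕ, 1 ≤ k → k ≤ n → ∀ φ : (Fin k → D) → ℝ, SymmFun φ →
    ((∀ ψ : (Fin (k - 1) → D) → ℝ, SymmFun ψ →
        ∫ ω, Ustat X n φ ω * Ustat X n ψ ω ∂μ = 0) ↔ Degenerate X μ φ)

/-- the symmetric Hoeffding spaces `SH_k(X_{[n]})`, `n ≥ 2`, `1 ≤ k ≤ n`, are all
non-trivial: each contains a `U`-statistic which is not a.s. zero. -/
def SHNontrivial {D : Type} (X : ℕ → Ω → D) (μ : Measure Ω) : Prop :=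
  ∀ n : ℕ, 2 ≤ n → ∀ k : ℕ, 1 ≤ k → k ≤ n →
    ∃ φ : (Fin k → D) → ℝ, SymmFun φ ∧
      (∀ ψ : (Fin (k - 1) → D) → ℝ, SymmFun ψ →
        ∫ ω, Ustat X n φ ω * Ustat X n ψ ω ∂μ = 0) ∧
      ∫ ω, (Ustat X n φ ω) ^ 2 ∂μ ≠ 0

/-- canonical symmetrization of a function of `m` variables. -/
noncomputable def symmetrize {D : Type} {m : ℕ} (f : (Fin m → D) → ℝ) : (Fin m → D) → ℝ :=
  fun x => (∑ π : Equiv.Perm (Fin m), f (x ∘ π)) / (Nat.factorial m : ℝ)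

/-- the vector `(y_1,…,y_u,x_1,…,x_{n-u})` of length `n` (for `1 ≤ u ≤ n`). -/
noncomputable def headTail {D : Type} [Nonempty D] (u n : ℕ) (y : Fin u → D)
    (x : Fin (n - 1) → D) : Fin n → D :=
  fun i =>
    if h : (i : ℕ) < u then y ⟨i, h⟩
    else if h2 : (i : ℕ) - u < n - 1 then x ⟨(i : ℕ) - u, h2⟩
    else Classical.arbitrary D

/-- `[T]^{(n-u)}_{n,n-1}`: the (version of the) conditional expectation
`E[T(X_1,…,X_n) ∣ X_{u+1},…,X_{u+n-1}]`, viewed as a function on `D^{n-1}`. -/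
noncomputable def condProj {D : Type} [Fintype D] [Nonempty D] (X : ℕ → Ω → D)
    (μ : Measure Ω) (n u : ℕ) (T : (Fin n → D) → ℝ) : (Fin (n - 1) → D) → ℝ :=
  fun x =>
    (∑ y : Fin u → D, T (headTail u n y x) * cylProb X μ (Fin.append y x)) / cylProb X μ x

/-- `X` is weakly independent: for every `n ≥ 2`, every symmetric `T : D^n → ℝ` with
`[T]^{(n-1)}_{n,n-1}(X_2,…,X_n) = 0` a.s. satisfies, for every `u = 2,…,n`,
`tilde-[T]^{(n-u)}_{n,n-1}(X_{u+1},…,X_{u+n-1}) = 0` a.s. -/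
def WeaklyIndependent {D : Type} [Fintype D] [Nonempty D] (X : ℕ → Ω → D)
    (μ : Measure Ω) : Prop :=
  ∀ n : ℕ, 2 ≤ n → ∀ T : (Fin n → D) → ℝ, SymmFun T →
    (∀ᵐ ω ∂μ, condProj X μ n 1 T (fun i : Fin (n - 1) => X ((i : ℕ) + 1) ω) = 0) →
    ∀ u : ℕ, 2 ≤ u → u ≤ n →
      ∀ᵐ ω ∂μ, symmetrize (condProj X μ n u T) (fun i : Fin (n - 1) => X (u + (i : ℕ)) ω) = 0

/-- `γ` is the de Finetti measure of the `{0,1}`-valued exchangeable sequence `X`. -/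
def IsDeFinettiMeasure (X : ℕ → Ω → Bool) (μ : Measure Ω) (γ : Measure ℝ) : Prop :=
  IsProbabilityMeasure γ ∧ γ (Set.Icc (0 : ℝ) 1)ᶜ = 0 ∧
  ∀ (n : ℕ) (x : Fin n → Bool),
    cylProb X μ x =
      ∫ θ, θ ^ (Finset.univ.filter fun i => x i = true).card *
        (1 - θ) ^ (Finset.univ.filter fun i => x i = false).card ∂γ

/-- the `n`-th moment of a measure on `[0,1] ⊆ ℝ`. -/
noncomputable def momentOf (γ : Measure ℝ) (n : ℕ) : ℝ := ∫ θ, θ ^ n ∂γ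

/-- the Beta(a,b) distribution on `[0,1]`, with density `θ^{a-1}(1-θ)^{b-1}/B(a,b)`. -/
noncomputable def betaMeasure (a b : ℝ) : Measure ℝ :=
  (volume.restrict (Set.Ioo (0 : ℝ) 1)).withDensity fun θ =>
    ENNReal.ofReal (θ ^ (a - 1) * (1 - θ) ^ (b - 1) /
      ∫ t in Set.Ioo (0 : ℝ) 1, t ^ (a - 1) * (1 - t) ^ (b - 1))

/-- the canonical completely degenerate kernel `φ_n^{(0)}` of order `n`:
`φ_n^{(0)}(0^{(k)}) = (-1)^k P_n(0^{(0)}) / P_n(0^{(k)})`. -/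
noncomputable def phi0 (X : ℕ → Ω → Bool) (μ : Measure Ω) (n : ℕ) :
    (Fin n → Bool) → ℝ :=
  fun x => (-1 : ℝ) ^ zeroCountVec x * (Pz X μ n 0 / Pz X μ n (zeroCountVec x))

/-- `f` is separately symmetric in its first `v` and last `m - v` variables. -/
def SepSymm {m : ℕ} (v : ℕ) (f : (Fin m → Bool) → ℝ) : Prop :=
  ∀ π : Equiv.Perm (Fin m), (∀ i : Fin m, (i : ℕ) < v ↔ ((π i : Fin m) : ℕ) < v) →
    ∀ x : Fin m → Bool, f (x ∘ π) = f x

/-- the canonical vector of `{0,1}^m` whose first `v` coordinates contain exactly `k`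
zeros and whose last `m - v` coordinates contain exactly `l` zeros. -/
def blockVec (m v k l : ℕ) : Fin m → Bool :=
  fun i => if (i : ℕ) < v then decide (k ≤ (i : ℕ)) else decide (l ≤ (i : ℕ) - v)

/-- `X` is an urn process in the sense of Hill, Lane and Sudderth: there are a measurable
`f : [0,1] → [0,1]` and positive integers `r`, `b` with
`P(X_{n+1} = 1 ∣ X_1,…,X_n) = f((r + X_1 + … + X_n)/(r + b + n))` a.s. for every `n ≥ 1`. -/
def IsUrnProcess (X : ℕ → Ω → Bool) (μ : Measure Ω) : Prop :=
  ∃ (f : ℝ → ℝ) (r b : ℕ), Measurable f ∧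
    Set.MapsTo f (Set.Icc (0 : ℝ) 1) (Set.Icc (0 : ℝ) 1) ∧ 0 < r ∧ 0 < b ∧
    ∀ n : ℕ, 1 ≤ n →
      (μ[(fun ω => if X n ω = true then (1 : ℝ) else 0) |
          MeasurableSpace.comap (fun ω (i : Fin n) => X (i : ℕ) ω) inferInstance]
        =ᵐ[μ] fun ω =>
          f (((r : ℝ) + ∑ i : Fin n, (if X (i : ℕ) ω = true then (1 : ℝ) else 0)) /
            ((r : ℝ) + (b : ℝ) + (n : ℝ))))


set_option maxHeartbeats 1000000

lemma ae_mem_Icc {γ : Measure ℝ} (hsupp : γ (Set.Icc (0:ℝ) 1)ᶜ = 0) :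
    ∀ᵐ θ ∂γ, θ ∈ Set.Icc (0:ℝ) 1 := by
  rw [MeasureTheory.ae_iff]
  exact hsupp

lemma integrable_of_suppIcc {γ : Measure ℝ} [IsFiniteMeasure γ]
    (hsupp : γ (Set.Icc (0:ℝ) 1)ᶜ = 0) {f : ℝ → ℝ} (hf : Continuous f) :
    Integrable f γ := by
  obtain ⟨C, hC⟩ := (isCompact_Icc (a := (0:ℝ)) (b := 1)).exists_bound_of_continuousOn
    hf.continuousOn
  refine Integrable.mono' (integrable_const C) hf.aestronglyMeasurable ?_
  filter_upwards [ae_mem_Icc hsupp] with θ hθ using hC θ hθ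

/-- Two probability measures on `[0,1]` with the same moments coincide. -/
lemma ext_of_moments (γ β : Measure ℝ) [IsProbabilityMeasure γ] [IsProbabilityMeasure β]
    (hγ : γ (Set.Icc (0:ℝ) 1)ᶜ = 0) (hβ : β (Set.Icc (0:ℝ) 1)ᶜ = 0)
    (h : ∀ n : ℕ, ∫ θ, θ ^ n ∂γ = ∫ θ, θ ^ n ∂β) : γ = β := by
  -- first: equal integrals of polynomials
  have hpoly : ∀ p : Polynomial ℝ, ∫ θ, p.eval θ ∂γ = ∫ θ, p.eval θ ∂β := by
    intro p
    have hev : ∀ θ : ℝ, p.eval θ =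
        ∑ i ∈ Finset.range (p.natDegree + 1), p.coeff i * θ ^ i := fun θ => by
      rw [Polynomial.eval_eq_sum_range]
    calc ∫ θ, p.eval θ ∂γ
        = ∑ i ∈ Finset.range (p.natDegree + 1), ∫ θ, p.coeff i * θ ^ i ∂γ := by
          rw [← integral_finset_sum]
          · simp_rw [← hev]
          · exact fun i _ => integrable_of_suppIcc hγ (continuous_const.mul (continuous_pow i))
      _ = ∑ i ∈ Finset.range (p.natDegree + 1), ∫ θ, p.coeff i * θ ^ i ∂β := by
          refine Finset.sum_congr rfl fun i _ => ?_
          rw [integral_const_mul, integral_const_mul, h]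
      _ = ∫ θ, p.eval θ ∂β := by
          rw [← integral_finset_sum]
          · simp_rw [← hev]
          · exact fun i _ => integrable_of_suppIcc hβ (continuous_const.mul (continuous_pow i))
  -- next: equal integrals of continuous functions
  have hcont : ∀ f : ℝ → ℝ, Continuous f → ∫ θ, f θ ∂γ = ∫ θ, f θ ∂β := by
    intro f hf
    have key : ∀ ε : ℝ, 0 < ε → |∫ θ, f θ ∂γ - ∫ θ, f θ ∂β| ≤ 2 * ε := by
      intro ε hε
      obtain ⟨p, hp⟩ := exists_polynomial_near_of_continuousOn 0 1 f hf.continuousOn ε hε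
      have hd : ∀ (m : Measure ℝ), IsProbabilityMeasure m → m (Set.Icc (0:ℝ) 1)ᶜ = 0 →
          |∫ θ, f θ ∂m - ∫ θ, p.eval θ ∂m| ≤ ε := by
        intro m hm' hm
        haveI := hm'
        rw [← integral_sub (integrable_of_suppIcc hm hf)
          (integrable_of_suppIcc hm p.continuous)]
        calc |∫ θ, (f θ - p.eval θ) ∂m| ≤ ε * (m Set.univ).toReal := by
              rw [← Real.norm_eq_abs]
              refine norm_integral_le_of_norm_le_const (μ := m)
                (f := fun θ => f θ - p.eval θ) (C := ε) ?_
              filter_upwards [ae_mem_Icc hm] with θ hθ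
              rw [Real.norm_eq_abs, abs_sub_comm]
              exact (hp θ hθ).le
          _ = ε := by simp
      have h1 := hd γ inferInstance hγ
      have h2 := hd β inferInstance hβ
      have := abs_sub_abs_le_abs_sub (∫ θ, f θ ∂γ - ∫ θ, p.eval θ ∂γ)
        (∫ θ, f θ ∂β - ∫ θ, p.eval θ ∂β)
      calc |∫ θ, f θ ∂γ - ∫ θ, f θ ∂β|
          = |(∫ θ, f θ ∂γ - ∫ θ, p.eval θ ∂γ) - (∫ θ, f θ ∂β - ∫ θ, p.eval θ ∂β)| := by
            rw [hpoly p, sub_sub_sub_cancel_right]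
        _ ≤ |∫ θ, f θ ∂γ - ∫ θ, p.eval θ ∂γ| + |∫ θ, f θ ∂β - ∫ θ, p.eval θ ∂β| :=
            abs_sub _ _
        _ ≤ 2 * ε := by linarith
    by_contra hne
    have hpos : 0 < |∫ θ, f θ ∂γ - ∫ θ, f θ ∂β| := by
      rw [abs_pos, sub_ne_zero]; exact hne
    have := key (|∫ θ, f θ ∂γ - ∫ θ, f θ ∂β| / 4) (by linarith)
    linarith
  -- finally: apply the finite-measure extensionality
  refine ext_of_forall_lintegral_eq_of_IsFiniteMeasure fun f => ?_
  have hfc : Continuous fun x : ℝ => (f x : ℝ) := NNReal.continuous_coe.comp f.continuous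
  have h1 : Integrable (fun x => (f x : ℝ)) γ := integrable_of_suppIcc hγ hfc
  have h2 : Integrable (fun x => (f x : ℝ)) β := integrable_of_suppIcc hβ hfc
  rw [lintegral_coe_eq_integral _ h1, lintegral_coe_eq_integral _ h2, hcont _ hfc]


-- counting lemmas
lemma trueCount_add_zeroCount {n : ℕ} (x : Fin n → Bool) :
    (Finset.univ.filter fun i => x i = true).card + zeroCountVec x = n := by
  classical
  rw [zeroCountVec]
  have h : (Finset.univ.filter fun i => x i = false) =
      (Finset.univ.filter fun i => ¬ x i = true) := by
    apply Finset.filter_congr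
    intro i _
    simp
  rw [h, Finset.card_filter_add_card_filter_not, Finset.card_univ, Fintype.card_fin]

lemma zeroCountVec_zeroVec {n j : ℕ} (hj : j ≤ n) : zeroCountVec (zeroVec n j) = j := by
  classical
  rw [zeroCountVec]
  have h : (Finset.univ.filter fun i => zeroVec n j i = false) =
      (Finset.univ.filter fun i : Fin n => (i : ℕ) < j) := by
    apply Finset.filter_congr
    intro i _
    simp only [zeroVec, decide_eq_false_iff_not, not_le]
  rw [h, Finset.card_filter, Fin.sum_univ_eq_sum_range (fun i => if i < j then 1 else 0),
    ← Finset.card_filter]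
  have h2 : Finset.filter (fun i => i < j) (Finset.range n) = Finset.range j := by
    ext i
    simp
    omega
  rw [h2, Finset.card_range]

-- the split of a zero count over `Fin (n+1)`
lemma zeroCountVec_castSucc {n : ℕ} (x : Fin (n+1) → Bool) :
    zeroCountVec x = zeroCountVec (fun i : Fin n => x i.castSucc) +
      (if x (Fin.last n) = false then 1 else 0) := by
  classical
  rw [zeroCountVec, zeroCountVec, Finset.card_filter, Finset.card_filter,
    Fin.sum_univ_castSucc]

lemma zeroCountVec_snoc {n : ℕ} (y : Fin n → Bool) (c : Bool) :
    zeroCountVec (Fin.snoc y c : Fin (n+1) → Bool) =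
      zeroCountVec y + (if c = false then 1 else 0) := by
  rw [zeroCountVec_castSucc]
  simp [Fin.snoc_castSucc, Fin.snoc_last]

-- cylinder sets are measurable
lemma measurable_cyl {D : Type} [MeasurableSpace D] [MeasurableSingletonClass D]
    (X : ℕ → Ω → D) (hX : ∀ i, Measurable (X i)) {n : ℕ} (x : Fin n → D) :
    MeasurableSet {ω | ∀ i : Fin n, X (i : ℕ) ω = x i} := by
  have : {ω | ∀ i : Fin n, X (i : ℕ) ω = x i} =
      ⋂ i : Fin n, (X (i : ℕ)) ⁻¹' {x i} := by
    ext ω; simp [Set.mem_iInter]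
  rw [this]
  exact MeasurableSet.iInter fun i => (hX _) (measurableSet_singleton _)

/-- partition of a configuration event into cylinders -/
lemma measure_config {D : Type} [MeasurableSpace D] [MeasurableSingletonClass D] [Fintype D]
    [DecidableEq D]
    (X : ℕ → Ω → D) (μ : Measure Ω) (hX : ∀ i, Measurable (X i)) {n : ℕ}
    (F : (Fin n → D) → Prop) [DecidablePred F] :
    μ {ω | F (fun i : Fin n => X (i : ℕ) ω)} =
      ∑ x ∈ Finset.univ.filter F, μ {ω | ∀ i : Fin n, X (i : ℕ) ω = x i} := by
  classical
  rw [← measure_biUnion_finset]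
  · congr 1
    ext ω
    simp only [Set.mem_iUnion, Set.mem_setOf_eq, Finset.mem_filter, Finset.mem_univ, true_and]
    constructor
    · intro h
      exact ⟨fun i => X (i : ℕ) ω, h, fun i => rfl⟩
    · rintro ⟨x, hx, hxe⟩
      have : (fun i : Fin n => X (i : ℕ) ω) = x := funext hxe
      rw [this]
      exact hx
  · intro x _ y _ hxy
    refine Set.disjoint_left.2 fun ω hx hy => hxy ?_
    funext i
    rw [← hx i, ← hy i]
  · exact fun x _ => measurable_cyl X hX x


-- new piece
noncomputable def momI (γ : Measure ℝ) (s t : ℕ) : ℝ := ∫ θ, θ ^ s * (1 - θ) ^ t ∂γ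

lemma momI_integrable (γ : Measure ℝ) [IsFiniteMeasure γ]
    (hsupp : γ (Set.Icc (0:ℝ) 1)ᶜ = 0) (s t : ℕ) :
    Integrable (fun θ : ℝ => θ ^ s * (1 - θ) ^ t) γ :=
  integrable_of_suppIcc hsupp (by fun_prop)

lemma momI_pascal (γ : Measure ℝ) [IsFiniteMeasure γ]
    (hsupp : γ (Set.Icc (0:ℝ) 1)ᶜ = 0) (s t : ℕ) :
    momI γ s t = momI γ (s+1) t + momI γ s (t+1) := by
  rw [momI, momI, momI, ← integral_add (momI_integrable γ hsupp _ _)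
    (momI_integrable γ hsupp _ _)]
  congr 1
  funext θ
  ring

lemma momI_zero (γ : Measure ℝ) [IsProbabilityMeasure γ] : momI γ 0 0 = 1 := by
  simp [momI]

lemma cylProb_eq_momI {X : ℕ → Ω → Bool} {μ : Measure Ω} {γ : Measure ℝ}
    (hγ : IsDeFinettiMeasure X μ γ) {n : ℕ} (x : Fin n → Bool) :
    cylProb X μ x = momI γ (n - zeroCountVec x) (zeroCountVec x) := by
  rw [hγ.2.2 n x, momI]
  have h := trueCount_add_zeroCount x
  have : (Finset.univ.filter fun i => x i = true).card = n - zeroCountVec x := by omega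
  rw [this]
  rfl

lemma momI_pos {X : ℕ → Ω → Bool} {μ : Measure Ω} {γ : Measure ℝ}
    (hγ : IsDeFinettiMeasure X μ γ) (hnd : NonDeterministic X μ) (s t : ℕ) :
    0 < momI γ s t := by
  haveI := hγ.1
  rcases Nat.eq_zero_or_pos (s + t) with h | h
  · obtain ⟨rfl, rfl⟩ : s = 0 ∧ t = 0 := by omega
    rw [momI_zero]; norm_num
  · have hle : t ≤ s + t := by omega
    have := hnd (s + t) h (zeroVec (s+t) t)
    rw [cylProb_eq_momI hγ, zeroCountVec_zeroVec hle] at this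
    have hst : s + t - t = s := by omega
    rwa [hst] at this

lemma measure_zeroCount (X : ℕ → Ω → Bool) (μ : Measure Ω) [IsProbabilityMeasure μ]
    {γ : Measure ℝ} (hX : ∀ i, Measurable (X i)) (hγ : IsDeFinettiMeasure X μ γ)
    (n p : ℕ) :
    (μ {ω | zeroCount X n ω = p}).toReal =
      ((Finset.univ.filter fun x : Fin n → Bool => zeroCountVec x = p).card : ℝ) *
        momI γ (n - p) p := by
  classical
  have h := measure_config X μ hX (fun x : Fin n → Bool => zeroCountVec x = p)
  have hset : {ω | zeroCount X n ω = p} =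
      {ω | (fun x : Fin n → Bool => zeroCountVec x = p) (fun i : Fin n => X (i:ℕ) ω)} := rfl
  rw [hset, h, ENNReal.toReal_sum (fun x _ => measure_ne_top μ _)]
  rw [Finset.sum_congr rfl (fun x hx => ?_), Finset.sum_const, nsmul_eq_mul]
  have hx' : zeroCountVec x = p := (Finset.mem_filter.1 hx).2
  show (μ {ω | ∀ i : Fin n, X (i : ℕ) ω = x i}).toReal = momI γ (n - p) p
  rw [show (μ {ω | ∀ i : Fin n, X (i : ℕ) ω = x i}).toReal = cylProb X μ x from rfl,
    cylProb_eq_momI hγ, hx']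

lemma measure_zeroCount_pair (X : ℕ → Ω → Bool) (μ : Measure Ω) [IsProbabilityMeasure μ]
    {γ : Measure ℝ} (hX : ∀ i, Measurable (X i)) (hγ : IsDeFinettiMeasure X μ γ)
    (n p : ℕ) :
    (μ {ω | zeroCount X (n + 1) ω = p ∧ zeroCount X n ω = p}).toReal =
      ((Finset.univ.filter fun x : Fin n → Bool => zeroCountVec x = p).card : ℝ) *
        momI γ (n + 1 - p) p := by
  classical
  have h := measure_config X μ hX (fun x : Fin (n+1) → Bool =>
    zeroCountVec x = p ∧ zeroCountVec (fun i : Fin n => x i.castSucc) = p)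
  have hset : {ω | zeroCount X (n + 1) ω = p ∧ zeroCount X n ω = p} =
      {ω | (fun x : Fin (n+1) → Bool =>
        zeroCountVec x = p ∧ zeroCountVec (fun i : Fin n => x i.castSucc) = p)
        (fun i : Fin (n+1) => X (i:ℕ) ω)} := by
    ext ω
    simp only [Set.mem_setOf_eq, zeroCount, Fin.coe_castSucc]
  rw [hset, h]
  -- re-index the sum by `Fin.snoc · true`
  have hbij : ∑ x ∈ Finset.univ.filter (fun x : Fin (n+1) → Bool =>
        zeroCountVec x = p ∧ zeroCountVec (fun i : Fin n => x i.castSucc) = p),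
        μ {ω | ∀ i : Fin (n+1), X (i : ℕ) ω = x i} =
      ∑ y ∈ Finset.univ.filter (fun y : Fin n → Bool => zeroCountVec y = p),
        μ {ω | ∀ i : Fin (n+1), X (i : ℕ) ω = (Fin.snoc y true : Fin (n+1) → Bool) i} := by
    refine (Finset.sum_bij (fun y _ => (Fin.snoc y true : Fin (n+1) → Bool)) ?_ ?_ ?_ ?_).symm
    · intro y hy
      have hy' : zeroCountVec y = p := (Finset.mem_filter.1 hy).2
      refine Finset.mem_filter.2 ⟨Finset.mem_univ _, ?_, ?_⟩
      · rw [zeroCountVec_snoc]; simp [hy']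
      · have : (fun i : Fin n => (Fin.snoc y true : Fin (n+1) → Bool) i.castSucc) = y := by
          funext i; rw [Fin.snoc_castSucc]
        rw [this, hy']
    · intro y1 h1 y2 h2 he
      funext i
      have := congrFun he i.castSucc
      simpa only [Fin.snoc_castSucc] using this
    · intro x hx
      obtain ⟨-, hx1, hx2⟩ := Finset.mem_filter.1 hx
      have hlast : x (Fin.last n) = true := by
        have hsum := zeroCountVec_castSucc x
        rw [hx1] at hsum
        rw [hx2] at hsum
        cases hxl : x (Fin.last n)
        · rw [hxl] at hsum
          simp at hsum
        · rfl
      refine ⟨fun i : Fin n => x i.castSucc, ?_, ?_⟩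
      · exact Finset.mem_filter.2 ⟨Finset.mem_univ _, hx2⟩
      · funext i
        refine Fin.lastCases ?_ ?_ i
        · simpa only [Fin.snoc_last] using hlast.symm
        · intro j
          simp only [Fin.snoc_castSucc]
    · intro y hy
      rfl
  rw [hbij, ENNReal.toReal_sum (fun x _ => measure_ne_top μ _)]
  rw [Finset.sum_congr rfl (fun y hy => ?_), Finset.sum_const, nsmul_eq_mul]
  have hy' : zeroCountVec y = p := (Finset.mem_filter.1 hy).2
  show cylProb X μ (Fin.snoc y true : Fin (n+1) → Bool) = momI γ (n + 1 - p) p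
  rw [cylProb_eq_momI hγ, zeroCountVec_snoc]
  simp [hy']

lemma condP_eq_momI (X : ℕ → Ω → Bool) (μ : Measure Ω) [IsProbabilityMeasure μ]
    {γ : Measure ℝ} (hX : ∀ i, Measurable (X i)) (hγ : IsDeFinettiMeasure X μ γ)
    (hnd : NonDeterministic X μ) {n p : ℕ} (hp : p ≤ n) :
    condP X μ n 1 p p = momI γ (n + 1 - p) p / momI γ (n - p) p := by
  classical
  rw [condP, measure_zeroCount X μ hX hγ, measure_zeroCount_pair X μ hX hγ]
  have hcard : (0:ℝ) < ((Finset.univ.filter fun x : Fin n → Bool =>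
      zeroCountVec x = p).card : ℝ) := by
    have : zeroVec n p ∈ Finset.univ.filter fun x : Fin n → Bool => zeroCountVec x = p :=
      Finset.mem_filter.2 ⟨Finset.mem_univ _, zeroCountVec_zeroVec hp⟩
    have := Finset.card_pos.2 ⟨_, this⟩
    exact_mod_cast this
  rw [mul_div_mul_left _ _ (ne_of_gt hcard)]


noncomputable def Jr (a b : ℝ) : ℝ := ∫ t in Set.Ioo (0 : ℝ) 1, t ^ (a - 1) * (1 - t) ^ (b - 1)

lemma complex_eq_real_on_Icc {a b : ℝ} {x : ℝ} (hx : x ∈ Set.Icc (0:ℝ) 1) :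
    ((x : ℂ) ^ ((a : ℂ) - 1) * (1 - (x : ℂ)) ^ ((b : ℂ) - 1)) =
      ((x ^ (a - 1) * (1 - x) ^ (b - 1) : ℝ) : ℂ) := by
  obtain ⟨h0, h1⟩ := hx
  rw [Complex.ofReal_mul, Complex.ofReal_cpow h0, Complex.ofReal_cpow (by linarith)]
  push_cast
  ring_nf

lemma Jr_integrableOn {a b : ℝ} (ha : 0 < a) (hb : 0 < b) :
    IntegrableOn (fun t : ℝ => t ^ (a - 1) * (1 - t) ^ (b - 1)) (Set.Ioo (0:ℝ) 1) volume := by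
  have hc := Complex.betaIntegral_convergent (u := (a : ℂ)) (v := (b : ℂ))
    (by simpa using ha) (by simpa using hb)
  rw [intervalIntegrable_iff_integrableOn_Ioc_of_le zero_le_one] at hc
  have hc2 : IntegrableOn (fun x : ℝ => ((x ^ (a - 1) * (1 - x) ^ (b - 1) : ℝ) : ℂ))
      (Set.Ioc (0:ℝ) 1) volume := by
    refine hc.congr_fun (fun x hx => ?_) measurableSet_Ioc
    exact complex_eq_real_on_Icc ⟨hx.1.le, hx.2⟩
  have h3 : IntegrableOn (fun x : ℝ => x ^ (a - 1) * (1 - x) ^ (b - 1))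
      (Set.Ioc (0:ℝ) 1) volume :=
    hc2.re.congr (Filter.Eventually.of_forall fun x => by simp)
  exact h3.mono_set Set.Ioo_subset_Ioc_self

lemma Jr_pos {a b : ℝ} (ha : 0 < a) (hb : 0 < b) : 0 < Jr a b := by
  rw [Jr]
  have hnn : 0 ≤ᵐ[volume.restrict (Set.Ioo (0:ℝ) 1)]
      fun t : ℝ => t ^ (a - 1) * (1 - t) ^ (b - 1) := by
    filter_upwards [ae_restrict_mem measurableSet_Ioo] with t ht
    exact mul_nonneg (Real.rpow_nonneg ht.1.le _) (Real.rpow_nonneg (by linarith [ht.2]) _)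
  rw [setIntegral_pos_iff_support_of_nonneg_ae hnn (Jr_integrableOn ha hb)]
  have hsub : Set.Ioo (0:ℝ) 1 ⊆
      Function.support (fun t : ℝ => t ^ (a - 1) * (1 - t) ^ (b - 1)) ∩ Set.Ioo (0:ℝ) 1 := by
    intro t ht
    refine ⟨?_, ht⟩
    exact ne_of_gt (mul_pos (Real.rpow_pos_of_pos ht.1 _)
      (Real.rpow_pos_of_pos (by linarith [ht.2]) _))
  calc (0:ENNReal) < volume (Set.Ioo (0:ℝ) 1) := by simp
    _ ≤ _ := measure_mono hsub

lemma Jr_eq_betaIntegral {a b : ℝ} :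
    (Jr a b : ℂ) = Complex.betaIntegral a b := by
  rw [Complex.betaIntegral, Jr]
  have h1 : ∫ t in Set.Ioo (0:ℝ) 1, t ^ (a - 1) * (1 - t) ^ (b - 1) =
      ∫ t in (0:ℝ)..1, t ^ (a - 1) * (1 - t) ^ (b - 1) := by
    rw [intervalIntegral.integral_of_le zero_le_one, integral_Ioc_eq_integral_Ioo]
  rw [h1, ← intervalIntegral.integral_ofReal]
  refine intervalIntegral.integral_congr fun x hx => ?_
  rw [Set.uIcc_of_le zero_le_one] at hx
  exact (complex_eq_real_on_Icc hx).symm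

lemma Jr_recurrence {a b : ℝ} (ha : 0 < a) (hb : 0 < b) :
    Jr (a + 1) b = (a / (a + b)) * Jr a b := by
  have hrec := Complex.betaIntegral_recurrence (u := (a:ℂ)) (v := (b:ℂ))
    (by simpa using ha) (by simpa using hb)
  -- Pascal identity for Jr
  have hpascal : Jr a b = Jr (a + 1) b + Jr a (b + 1) := by
    rw [Jr, Jr, Jr, ← integral_add (Jr_integrableOn (by linarith) hb)
      (Jr_integrableOn ha (by linarith))]
    refine setIntegral_congr_fun measurableSet_Ioo fun t ht => ?_
    have h1 : t ^ (a + 1 - 1) = t ^ (a - 1) * t := by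
      rw [show a + 1 - 1 = (a - 1) + 1 by ring, Real.rpow_add ht.1, Real.rpow_one]
    have h2 : (1 - t) ^ (b + 1 - 1) = (1 - t) ^ (b - 1) * (1 - t) := by
      rw [show b + 1 - 1 = (b - 1) + 1 by ring, Real.rpow_add (by linarith [ht.2]),
        Real.rpow_one]
    rw [h1, h2]
    ring
  -- transfer recurrence to Jr
  have e1 : ((a:ℂ)) * (Jr a (b+1) : ℂ) = ((b:ℂ)) * (Jr (a+1) b : ℂ) := by
    rw [Jr_eq_betaIntegral, Jr_eq_betaIntegral]
    convert hrec using 3 <;> push_cast <;> ring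
  have e2 : a * Jr a (b + 1) = b * Jr (a + 1) b := by
    have := congrArg Complex.re e1
    simpa [Complex.ofReal_mul] using this
  have hab : a + b ≠ 0 := by positivity
  field_simp
  nlinarith [e2, hpascal]



lemma density_measurable (a b : ℝ) :
    Measurable fun θ : ℝ => (θ ^ (a - 1) * (1 - θ) ^ (b - 1) / Jr a b).toNNReal := by
  apply Measurable.real_toNNReal
  apply Measurable.div_const
  fun_prop

lemma betaMeasure_integral {a b : ℝ} (ha : 0 < a) (hb : 0 < b) (g : ℝ → ℝ) :
    ∫ θ, g θ ∂betaMeasure a b =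
      (∫ θ in Set.Ioo (0:ℝ) 1, g θ * (θ ^ (a - 1) * (1 - θ) ^ (b - 1))) / Jr a b := by
  rw [betaMeasure]
  have hd : (fun θ : ℝ => ENNReal.ofReal (θ ^ (a - 1) * (1 - θ) ^ (b - 1) /
      ∫ t in Set.Ioo (0 : ℝ) 1, t ^ (a - 1) * (1 - t) ^ (b - 1))) =
      fun θ : ℝ => ((θ ^ (a - 1) * (1 - θ) ^ (b - 1) / Jr a b).toNNReal : ENNReal) := rfl
  rw [hd, integral_withDensity_eq_integral_smul (density_measurable a b) g]
  rw [← integral_div]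
  refine setIntegral_congr_fun measurableSet_Ioo fun θ hθ => ?_
  have hpos : 0 ≤ θ ^ (a - 1) * (1 - θ) ^ (b - 1) :=
    mul_nonneg (Real.rpow_nonneg hθ.1.le _) (Real.rpow_nonneg (by linarith [hθ.2]) _)
  have hz : 0 ≤ θ ^ (a - 1) * (1 - θ) ^ (b - 1) / Jr a b :=
    div_nonneg hpos (Jr_pos ha hb).le
  rw [NNReal.smul_def, Real.coe_toNNReal _ hz, smul_eq_mul]
  ring

lemma betaMeasure_moment {a b : ℝ} (ha : 0 < a) (hb : 0 < b) (n : ℕ) :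
    ∫ θ, θ ^ n ∂betaMeasure a b = Jr (a + n) b / Jr a b := by
  rw [betaMeasure_integral ha hb]
  congr 1
  rw [Jr]
  refine setIntegral_congr_fun measurableSet_Ioo fun θ hθ => ?_
  have h1 : θ ^ (a + n - 1) = θ ^ (a - 1) * θ ^ (n : ℕ) := by
    rw [show a + (n:ℝ) - 1 = (a - 1) + (n:ℝ) by ring, Real.rpow_add hθ.1,
      Real.rpow_natCast]
  rw [h1]
  ring

lemma betaMeasure_prob {a b : ℝ} (ha : 0 < a) (hb : 0 < b) :
    IsProbabilityMeasure (betaMeasure a b) := by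
  constructor
  have hd : (fun θ : ℝ => ENNReal.ofReal (θ ^ (a - 1) * (1 - θ) ^ (b - 1) /
      ∫ t in Set.Ioo (0 : ℝ) 1, t ^ (a - 1) * (1 - t) ^ (b - 1))) =
      fun θ : ℝ => ENNReal.ofReal (θ ^ (a - 1) * (1 - θ) ^ (b - 1) / Jr a b) := rfl
  rw [betaMeasure, hd, withDensity_apply _ MeasurableSet.univ, Measure.restrict_univ]
  have hint : IntegrableOn (fun θ : ℝ => θ ^ (a - 1) * (1 - θ) ^ (b - 1) / Jr a b)
      (Set.Ioo (0:ℝ) 1) volume := (Jr_integrableOn ha hb).div_const _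
  have hnn : 0 ≤ᵐ[volume.restrict (Set.Ioo (0:ℝ) 1)]
      fun θ : ℝ => θ ^ (a - 1) * (1 - θ) ^ (b - 1) / Jr a b := by
    filter_upwards [ae_restrict_mem measurableSet_Ioo] with θ hθ
    exact div_nonneg (mul_nonneg (Real.rpow_nonneg hθ.1.le _)
      (Real.rpow_nonneg (by linarith [hθ.2]) _)) (Jr_pos ha hb).le
  have := ofReal_integral_eq_lintegral_ofReal hint hnn
  rw [← this]
  have : ∫ θ in Set.Ioo (0:ℝ) 1, θ ^ (a - 1) * (1 - θ) ^ (b - 1) / Jr a b =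
      Jr a b / Jr a b := by rw [integral_div]; rfl
  rw [this, div_self (Jr_pos ha hb).ne', ENNReal.ofReal_one]

lemma betaMeasure_supp {a b : ℝ} : betaMeasure a b (Set.Icc (0:ℝ) 1)ᶜ = 0 := by
  rw [betaMeasure, withDensity_apply _ measurableSet_Icc.compl,
    Measure.restrict_restrict measurableSet_Icc.compl]
  have : (Set.Icc (0:ℝ) 1)ᶜ ∩ Set.Ioo (0:ℝ) 1 = ∅ := by
    rw [Set.eq_empty_iff_forall_notMem]
    rintro t ⟨h1, h2⟩
    exact h1 ⟨h2.1.le, h2.2.le⟩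
  rw [this, Measure.restrict_empty, lintegral_zero_measure]


lemma eq_dirac_of_null_compl (γ : Measure ℝ) [IsProbabilityMeasure γ] (x : ℝ)
    (h : γ {x}ᶜ = 0) : γ = Measure.dirac x := by
  ext s hs
  rw [Measure.dirac_apply' _ hs]
  have hdiff : γ (s \ {x}) = 0 :=
    measure_mono_null (fun y hy => hy.2) h
  have h1 : γ s = γ (s ∩ {x}) := by
    have h2 := measure_inter_add_diff (μ := γ) s (measurableSet_singleton x)
    rw [hdiff, add_zero] at h2
    exact h2.symm
  by_cases hx : x ∈ s
  · have hsing : s ∩ {x} = {x} := by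
      apply Set.eq_of_subset_of_subset (Set.inter_subset_right)
      exact fun y hy => ⟨by rwa [hy], hy⟩
    have hcompl := measure_add_measure_compl (μ := γ) (measurableSet_singleton x)
    rw [h, add_zero, measure_univ] at hcompl
    rw [h1, hsing, hcompl, Set.indicator_of_mem hx]
    rfl
  · have hempty : s ∩ {x} = ∅ := by
      rw [Set.eq_empty_iff_forall_notMem]
      rintro y ⟨hy1, hy2⟩
      rw [hy2] at hy1
      exact hx hy1
    rw [h1, hempty, measure_empty, Set.indicator_of_notMem hx]

lemma var_pos (γ : Measure ℝ) [IsProbabilityMeasure γ] (hsupp : γ (Set.Icc (0:ℝ) 1)ᶜ = 0)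
    (hnotiid : ¬∃ x : ℝ, γ = Measure.dirac x) :
    0 < momI γ 2 0 - (momI γ 1 0) ^ 2 := by
  set m1 := momI γ 1 0 with hm1
  have h10 : momI γ 1 0 = ∫ θ, θ ∂γ := by simp [momI]
  have h20 : momI γ 2 0 = ∫ θ, θ ^ 2 ∂γ := by simp [momI]
  have i1 : Integrable (fun θ : ℝ => θ ^ 2) γ := integrable_of_suppIcc hsupp (by fun_prop)
  have i2 : Integrable (fun θ : ℝ => θ) γ := integrable_of_suppIcc hsupp (by fun_prop)
  have hint2 : Integrable (fun θ : ℝ => (θ - m1) ^ 2) γ :=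
    integrable_of_suppIcc hsupp (by fun_prop)
  have hexp : ∫ θ, (θ - m1) ^ 2 ∂γ = momI γ 2 0 - m1 ^ 2 := by
    have e : ∀ θ : ℝ, (θ - m1) ^ 2 = θ ^ 2 - 2 * m1 * θ + m1 ^ 2 := fun θ => by ring
    calc ∫ θ, (θ - m1) ^ 2 ∂γ = ∫ θ, (θ ^ 2 - 2 * m1 * θ + m1 ^ 2) ∂γ := by
          simp_rw [e]
      _ = (∫ θ, (θ ^ 2 - 2 * m1 * θ) ∂γ) + ∫ _θ, (m1 ^ 2 : ℝ) ∂γ := by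
          rw [integral_add (f := fun θ : ℝ => θ ^ 2 - 2 * m1 * θ) (g := fun _ : ℝ => m1 ^ 2)
            (i1.sub (i2.const_mul _)) (integrable_const _)]
      _ = (∫ θ, θ ^ 2 ∂γ) - (∫ θ, 2 * m1 * θ ∂γ) + m1 ^ 2 := by
          rw [integral_sub (f := fun θ : ℝ => θ ^ 2) (g := fun θ : ℝ => 2 * m1 * θ) i1
            (i2.const_mul _), integral_const]
          simp
      _ = momI γ 2 0 - m1 ^ 2 := by
          rw [integral_const_mul, ← h20, ← h10, ← hm1]
          ring
  have hge : 0 ≤ ∫ θ, (θ - m1) ^ 2 ∂γ := integral_nonneg fun θ => sq_nonneg _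
  rcases lt_or_eq_of_le hge with hlt | heq
  · linarith [hexp]
  · exfalso
    have hz := (integral_eq_zero_iff_of_nonneg (fun θ => sq_nonneg _) hint2).1 heq.symm
    have hnull : γ {m1}ᶜ = 0 := by
      rw [Filter.EventuallyEq, ae_iff] at hz
      refine measure_mono_null (fun θ hθ => ?_) hz
      simp only [Set.mem_setOf_eq, Pi.zero_apply]
      simp only [Set.mem_compl_iff, Set.mem_singleton_iff] at hθ
      intro hc
      exact hθ (by nlinarith [sq_nonneg (θ - m1)])
    exact hnotiid ⟨m1, eq_dirac_of_null_compl γ m1 hnull⟩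


/-- Diaconis–Ylvisaker. Let `X` be a non-deterministic infinite
exchangeable `{0,1}`-valued sequence whose de Finetti measure `γ` is not a Dirac mass.
If there are real sequences `(a_n)`, `(b_n)` such that for every `n ≥ 1` and `p = 0,…,n`
the predictive probability `P^n_{n+1}(0^{(p)} ∣ 0^{(p)})` equals `a_n p + b_n`, then `γ`
is a Beta(α,β) distribution for some `α, β > 0`. -/
theorem linear_predictive_implies_beta
    {Ω : Type} [MeasurableSpace Ω] (μ : Measure Ω) [IsProbabilityMeasure μ]
    (X : ℕ → Ω → Bool) (γ : Measure ℝ)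
    (hexch : Exchangeable X μ) (hnd : NonDeterministic X μ)
    (hγ : IsDeFinettiMeasure X μ γ)
    (hnotiid : ¬∃ x : ℝ, γ = Measure.dirac x)
    (a b : ℕ → ℝ)
    (hlin : ∀ n : ℕ, 1 ≤ n → ∀ p : ℕ, p ≤ n →
      condP X μ n 1 p p = a n * (p : ℝ) + b n) :
    ∃ α β : ℝ, 0 < α ∧ 0 < β ∧ γ = betaMeasure α β := by
  classical
  obtain ⟨hX, -⟩ := hexch
  haveI hγprob : IsProbabilityMeasure γ := hγ.1
  have hsupp := hγ.2.1
  have hpos : ∀ s t, 0 < momI γ s t := momI_pos hγ hnd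
  have hpascal : ∀ s t, momI γ s t = momI γ (s+1) t + momI γ s (t+1) := momI_pascal γ hsupp
  set q : ℕ → ℕ → ℝ := fun n k => momI γ (k+1) (n-k) / momI γ k (n-k) with hqdef
  set A : ℕ → ℝ := fun n => -(a n) with hAdef
  set B : ℕ → ℝ := fun n => a n * n + b n with hBdef
  have hqmul : ∀ n k : ℕ, q n k * momI γ k (n-k) = momI γ (k+1) (n-k) := by
    intro n k
    rw [hqdef]
    exact div_mul_cancel₀ _ (hpos k (n-k)).ne'
  have hqlin : ∀ n, 1 ≤ n → ∀ k, k ≤ n → q n k = A n * k + B n := by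
    intro n hn k hk
    have hp : n - k ≤ n := Nat.sub_le n k
    have h1 := hlin n hn (n - k) hp
    rw [condP_eq_momI X μ hX hγ hnd hp] at h1
    have e1 : n + 1 - (n - k) = k + 1 := by omega
    have e2 : n - (n - k) = k := by omega
    rw [e1, e2] at h1
    rw [hqdef]
    simp only
    rw [h1, Nat.cast_sub hk, hAdef, hBdef]
    ring
  -- the consistency recursion
  have hqsucc : ∀ n, 1 ≤ n → ∀ k, k ≤ n → q (n+1) k = q n k - A (n+1) * q n k := by
    intro n hn k hk
    have e5 := hqmul n k
    have e2 : q (n+1) (k+1) * momI γ (k+1) (n-k) = momI γ (k+2) (n-k) := by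
      have := hqmul (n+1) (k+1)
      rwa [Nat.succ_sub_succ] at this
    have e3 : q (n+1) k * momI γ k ((n-k)+1) = momI γ (k+1) ((n-k)+1) := by
      have := hqmul (n+1) k
      rwa [show n + 1 - k = (n-k)+1 from by omega] at this
    have pA := hpascal (k+1) (n-k)
    have pB := hpascal k (n-k)
    have key2 : momI γ (k+1) (n-k) =
        q (n+1) (k+1) * momI γ (k+1) (n-k) + q (n+1) k * momI γ k ((n-k)+1) := by
      rw [e2, e3]
      exact pA
    have key3 : q n k * momI γ k (n-k) =
        q (n+1) (k+1) * (q n k * momI γ k (n-k)) +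
          q (n+1) k * (momI γ k (n-k) - q n k * momI γ k (n-k)) := by
      rw [e5, show momI γ k (n-k) - momI γ (k+1) (n-k) = momI γ k ((n-k)+1) from by
        linarith [pB]]
      exact key2
    have key : q n k = q (n+1) (k+1) * q n k + q (n+1) k * (1 - q n k) := by
      apply mul_right_cancel₀ (hpos k (n-k)).ne'
      linear_combination key3
    have hdiff : q (n+1) (k+1) = q (n+1) k + A (n+1) := by
      rw [hqlin (n+1) (by omega) (k+1) (by omega), hqlin (n+1) (by omega) k (by omega)]
      push_cast
      ring
    linear_combination (-1 : ℝ) * key - q n k * hdiff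
  have hABrec : ∀ n, 1 ≤ n → A (n+1) * (1 + A n) = A n ∧ B (n+1) = B n * (1 - A (n+1)) := by
    intro n hn
    have h0 := hqsucc n hn 0 (Nat.zero_le n)
    have h1 := hqsucc n hn 1 hn
    rw [hqlin (n+1) (by omega) 0 (by omega), hqlin n hn 0 (Nat.zero_le n)] at h0
    rw [hqlin (n+1) (by omega) 1 (by omega), hqlin n hn 1 hn] at h1
    push_cast at h0 h1
    constructor
    · linear_combination h1 - h0
    · linear_combination h0
  -- basic data at n = 1
  have hq11 : q 1 1 = momI γ 2 0 / momI γ 1 0 := by rw [hqdef]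
  have hq10 : q 1 0 = momI γ 1 1 / momI γ 0 1 := by rw [hqdef]
  have hvar := var_pos γ hsupp hnotiid
  have p00 := hpascal 0 0
  have p10 := hpascal 1 0
  have i00 := momI_zero γ
  have hI11 : momI γ 1 1 = momI γ 1 0 - momI γ 2 0 := by linarith
  have hI01 : momI γ 0 1 = 1 - momI γ 1 0 := by linarith
  have hA1pos : 0 < A 1 := by
    have hA1eq : A 1 = q 1 1 - q 1 0 := by
      rw [hqlin 1 le_rfl 1 le_rfl, hqlin 1 le_rfl 0 (by omega)]
      push_cast
      ring
    rw [hA1eq, hq11, hq10, sub_pos, div_lt_div_iff₀ (hpos 0 1) (hpos 1 0)]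
    rw [hI11, hI01]
    nlinarith [hvar]
  have hB1pos : 0 < B 1 := by
    have hB1eq : B 1 = q 1 0 := by
      rw [hqlin 1 le_rfl 0 (by omega)]
      push_cast
      ring
    rw [hB1eq, hq10]
    exact div_pos (hpos 1 1) (hpos 0 1)
  have hsum1 : A 1 + B 1 < 1 := by
    have hq11lt : q 1 1 < 1 := by
      rw [hq11, div_lt_one (hpos 1 0)]
      linarith [hpos 1 1]
    have h := hqlin 1 le_rfl 1 le_rfl
    push_cast at h
    linarith
  set α := B 1 / A 1 with hαdef
  set βv := (1 - A 1 - B 1) / A 1 with hβdef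
  have hαpos : 0 < α := div_pos hB1pos hA1pos
  have hβvpos : 0 < βv := div_pos (by linarith) hA1pos
  have hs1 : α + βv + 1 = 1 / A 1 := by
    rw [hαdef, hβdef]
    field_simp
    ring
  have hclosed : ∀ n, 1 ≤ n → A n = 1 / (α + βv + n) ∧ B n = α / (α + βv + n) := by
    intro n hn
    induction n, hn using Nat.le_induction with
    | base =>
      constructor
      · rw [Nat.cast_one, hs1, one_div_one_div]
      · rw [Nat.cast_one, hs1, hαdef]
        field_simp
    | succ n hn ih =>
      obtain ⟨ihA, ihB⟩ := ih
      obtain ⟨hr1, hr2⟩ := hABrec n hn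
      have hsn : (0:ℝ) < α + βv + n := by
        have : (0:ℝ) ≤ n := Nat.cast_nonneg n
        linarith
      have hsn1 : (0:ℝ) < α + βv + n + 1 := by linarith
      have hcast : ((n+1:ℕ):ℝ) = (n:ℝ) + 1 := by push_cast; ring
      have hAn1 : A (n+1) = 1 / (α + βv + n + 1) := by
        rw [ihA] at hr1
        field_simp at hr1 ⊢
        linarith
      constructor
      · rw [hcast, hAn1]
        ring_nf
      · rw [hcast, hr2, ihB, hAn1,
          show α + βv + ((n:ℝ) + 1) = α + βv + (n:ℝ) + 1 from by ring,
          eq_div_iff hsn1.ne']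
        field_simp [hsn.ne', hsn1.ne']
        ring
  -- moments of γ
  have hm : ∀ n : ℕ, momI γ n 0 = ∏ j ∈ Finset.range n, ((α + j) / (α + βv + j)) := by
    intro n
    induction n with
    | zero =>
      rw [Finset.range_zero, Finset.prod_empty]
      exact momI_zero γ
    | succ n ih =>
      rcases Nat.eq_zero_or_pos n with rfl | hn
      · simp only [Finset.range_one, Finset.prod_singleton, Nat.cast_zero, add_zero,
          zero_add]
        have hc1 := hclosed 1 le_rfl
        have hs : (0:ℝ) < α + βv + 1 := by linarith
        have e_b : q 1 1 * momI γ 1 0 = momI γ 2 0 := by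
          have := hqmul 1 1
          simpa using this
        have e_a : q 1 0 * momI γ 0 1 = momI γ 1 1 := by
          have := hqmul 1 0
          simpa using this
        have hq10v : q 1 0 = α / (α + βv + 1) := by
          rw [hqlin 1 le_rfl 0 (by omega), hc1.2]
          push_cast
          ring
        have hq11v : q 1 1 = (α + 1) / (α + βv + 1) := by
          rw [hqlin 1 le_rfl 1 le_rfl, hc1.1, hc1.2]
          push_cast
          field_simp
          ring
        rw [hq10v, hI01, hI11] at e_a
        rw [hq11v] at e_b
        rw [div_mul_eq_mul_div, div_eq_iff hs.ne'] at e_a e_b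
        rw [eq_div_iff (by positivity : (α + βv : ℝ) ≠ 0)]
        linear_combination - e_a - e_b
      · have hqn : q n n = (α + n) / (α + βv + n) := by
          rw [hqlin n hn n le_rfl, (hclosed n hn).1, (hclosed n hn).2]
          have hsn : (0:ℝ) < α + βv + n := by
            have : (0:ℝ) ≤ n := Nat.cast_nonneg n
            linarith
          field_simp
          ring
        have e : q n n * momI γ n 0 = momI γ (n+1) 0 := by
          have := hqmul n n
          rwa [Nat.sub_self] at this
        rw [Finset.prod_range_succ, ← ih, ← e, hqn]
        ring
  -- conclude via the Beta measure
  haveI hβprob := betaMeasure_prob hαpos hβvpos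
  refine ⟨α, βv, hαpos, hβvpos, ?_⟩
  refine ext_of_moments γ (betaMeasure α βv) hsupp betaMeasure_supp ?_
  intro n
  have hbm := betaMeasure_moment hαpos hβvpos n
  have hbprod : ∀ m : ℕ, Jr (α + m) βv / Jr α βv =
      ∏ j ∈ Finset.range m, ((α + j) / (α + βv + j)) := by
    intro m
    induction m with
    | zero => simp [div_self (Jr_pos hαpos hβvpos).ne']
    | succ m ihm =>
      have hrec := Jr_recurrence (add_pos_of_pos_of_nonneg hαpos (Nat.cast_nonneg m)) hβvpos
      rw [Finset.prod_range_succ, ← ihm, show ((m+1:ℕ):ℝ) = (m:ℝ) + 1 from by push_cast; ring,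
        show α + ((m:ℝ) + 1) = (α + m) + 1 from by ring, hrec]
      ring
  have hγn : ∫ θ, θ ^ n ∂γ = momI γ n 0 := by simp [momI]
  rw [hγn, hbm, hbprod n, hm n]


end HoeffdingUrn
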